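/- arXiv:0908.0897 — 8 statements merged into one kernel-verified Lean document; each statement's English description precedes it below -/
import Mathlib

section
/- If (A_n) is a sequence of measurable sets with 0 < π(A_n) < 1 and k(A_n) → 2, then π(A_n) → 1/2. -/
open MeasureTheory ProbabilityTheory

/-- The `n`-step transition kernel (`n`-fold composition of `κ`). -/
noncomputable def kpow {Ω : Type*} [MeasurableSpace Ω] (κ : Kernel Ω Ω) : ℕ → Kernel Ω Ω
  | 0 => Kernel.id
  | n + 1 => (kpow κ n) ∘ₖ κ

/-- The probability flow out of the set `A`: `∫_A p(x, Aᶜ) π(dx)`. -/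
noncomputable def flow {Ω : Type*} [MeasurableSpace Ω] (κ : Kernel Ω Ω) (π : Measure Ω)
    (A : Set Ω) : ℝ :=
  (∫⁻ x in A, κ x Aᶜ ∂π).toReal

/-- The isoperimetric quantity `k(A) = (1/(π(A)π(Aᶜ))) ∫_A p(x, Aᶜ) π(dx)`. -/
noncomputable def isoQ {Ω : Type*} [MeasurableSpace Ω] (κ : Kernel Ω Ω) (π : Measure Ω)
    (A : Set Ω) : ℝ :=
  flow κ π A / ((π A).toReal * (π Aᶜ).toReal)

/-- Reversibility: `π(dx)p(x,dy) = π(dy)p(y,dx)`. -/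
def Reversible {Ω : Type*} [MeasurableSpace Ω] (κ : Kernel Ω Ω) (π : Measure Ω) : Prop :=
  ∀ A B : Set Ω, MeasurableSet A → MeasurableSet B →
    ∫⁻ x in A, κ x B ∂π = ∫⁻ x in B, κ x A ∂π

/-- `k_n := inf over A with 0 < π(A) < 1 of k_n(A)`, the `n`-step isoperimetric constant. -/
noncomputable def kinfN {Ω : Type*} [MeasurableSpace Ω] (κ : Kernel Ω Ω) (π : Measure Ω)
    (n : ℕ) : ℝ :=
  sInf ((fun A => isoQ (kpow κ n) π A) ''
    {A : Set Ω | MeasurableSet A ∧ 0 < π A ∧ π A < 1})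

/-- `K := sup over A with 0 < π(A) < 1 of k(A)`. -/
noncomputable def Ksup {Ω : Type*} [MeasurableSpace Ω] (κ : Kernel Ω Ω) (π : Measure Ω) : ℝ :=
  sSup ((fun A => isoQ κ π A) ''
    {A : Set Ω | MeasurableSet A ∧ 0 < π A ∧ π A < 1})


lemma flow_le_min {Ω : Type*} [MeasurableSpace Ω] (κ : Kernel Ω Ω) [IsMarkovKernel κ]
    (π : Measure Ω) [IsProbabilityMeasure π]
    (hinv : ∀ B : Set Ω, MeasurableSet B → π B = ∫⁻ x, κ x B ∂π)
    (A : Set Ω) (hA : MeasurableSet A) :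
    flow κ π A ≤ min (π A).toReal (π Aᶜ).toReal := by
  have h1 : ∫⁻ x in A, κ x Aᶜ ∂π ≤ π A := by
    calc ∫⁻ x in A, κ x Aᶜ ∂π ≤ ∫⁻ _ in A, 1 ∂π :=
      lintegral_mono fun x => prob_le_one
    _ = π A := by simp
  have h2 : ∫⁻ x in A, κ x Aᶜ ∂π ≤ π Aᶜ := by
    rw [hinv Aᶜ hA.compl]
    exact lintegral_mono' Measure.restrict_le_self le_rfl
  exact le_min (ENNReal.toReal_mono (measure_ne_top π A) h1)
    (ENNReal.toReal_mono (measure_ne_top π Aᶜ) h2)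

lemma isoQ_le_inv_max {Ω : Type*} [MeasurableSpace Ω] (κ : Kernel Ω Ω) [IsMarkovKernel κ]
    (π : Measure Ω) [IsProbabilityMeasure π]
    (hinv : ∀ B : Set Ω, MeasurableSet B → π B = ∫⁻ x, κ x B ∂π)
    (A : Set Ω) (hA : MeasurableSet A) (h0 : 0 < π A) (h1 : π A < 1) :
    isoQ κ π A ≤ 1 / max (π A).toReal (π Aᶜ).toReal := by
  set a := (π A).toReal with ha
  set b := (π Aᶜ).toReal with hb
  have hap : 0 < a := ENNReal.toReal_pos h0.ne' (measure_ne_top π A)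
  have hbp : 0 < b := by
    have hc : 0 < π Aᶜ := by
      rw [prob_compl_eq_one_sub hA]
      exact tsub_pos_of_lt h1
    exact ENNReal.toReal_pos hc.ne' (measure_ne_top π Aᶜ)
  have hmaxp : 0 < max a b := lt_max_of_lt_left hap
  have key : min a b / (a * b) = 1 / max a b := by
    rw [← min_mul_max a b, div_eq_div_iff (by positivity) hmaxp.ne', one_mul]
  calc isoQ κ π A ≤ min a b / (a * b) := by
        unfold isoQ
        exact div_le_div_of_nonneg_right (flow_le_min κ π hinv A hA) (by positivity) |>.trans_eq rfl
    _ = 1 / max a b := key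

/-- If `k(Aₙ) → 2` then `π(Aₙ) → 1/2`. -/
theorem tendsto_measure_half_of_isoQ_tendsto_two {Ω : Type*} [MeasurableSpace Ω]
    (κ : Kernel Ω Ω) [IsMarkovKernel κ] (π : Measure Ω) [IsProbabilityMeasure π]
    (hinv : ∀ B : Set Ω, MeasurableSet B → π B = ∫⁻ x, κ x B ∂π)
    (hK : Ksup κ π = 2)
    (A : ℕ → Set Ω) (hA : ∀ n, MeasurableSet (A n))
    (h0 : ∀ n, 0 < π (A n)) (h1 : ∀ n, π (A n) < 1)
    (hk : Filter.Tendsto (fun n => isoQ κ π (A n)) Filter.atTop (nhds 2)) :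
    Filter.Tendsto (fun n => (π (A n)).toReal) Filter.atTop (nhds (1 / 2)) := by
  set a := fun n => (π (A n)).toReal with ha
  have hb : ∀ n, (π (A n)ᶜ).toReal = 1 - a n := by
    intro n
    rw [prob_compl_eq_one_sub (hA n), ENNReal.toReal_sub_of_le (h1 n).le ENNReal.one_ne_top]
    simp [ha]
  set m := fun n => max (a n) (1 - a n) with hm
  have hrange : ∀ n, 0 ≤ a n ∧ a n ≤ 1 := by
    intro n
    constructor
    · exact ENNReal.toReal_nonneg
    · exact ENNReal.toReal_le_of_le_ofReal one_pos.le (by simpa using (h1 n).le)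
  have hmhalf : ∀ n, 1/2 ≤ m n := by
    intro n
    have hl := le_max_left (a n) (1 - a n)
    have hr := le_max_right (a n) (1 - a n)
    simp only [hm]; linarith
  have hmp : ∀ n, 0 < m n := fun n => lt_of_lt_of_le (by norm_num) (hmhalf n)
  have hub : ∀ n, isoQ κ π (A n) ≤ 1 / m n := by
    intro n
    have := isoQ_le_inv_max κ π hinv (A n) (hA n) (h0 n) (h1 n)
    rwa [hb n] at this
  have h2le : ∀ n, 1 / m n ≤ 2 := by
    intro n
    rw [div_le_iff₀ (hmp n)]
    linarith [hmhalf n]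
  have hinvt : Filter.Tendsto (fun n => 1 / m n) Filter.atTop (nhds 2) :=
    tendsto_of_tendsto_of_tendsto_of_le_of_le hk tendsto_const_nhds hub h2le
  have hmt : Filter.Tendsto m Filter.atTop (nhds (1/2)) := by
    have := hinvt.inv₀ (by norm_num : (2:ℝ) ≠ 0)
    have heq : (fun n => (1 / m n)⁻¹) = m := by
      funext n; rw [one_div, inv_inv]
    rw [heq] at this
    simpa using this
  have hma : ∀ n, m n = 1/2 + |a n - 1/2| := by
    intro n
    show max (a n) (1 - a n) = 1/2 + |a n - 1/2|
    rcases le_total (a n) (1/2) with h | h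
    · rw [max_eq_right (by linarith), abs_of_nonpos (by linarith)]
      ring
    · rw [max_eq_left (by linarith), abs_of_nonneg (by linarith)]
      ring
  have habs : Filter.Tendsto (fun n => |a n - 1/2|) Filter.atTop (nhds 0) := by
    have h' : Filter.Tendsto (fun n => m n - 1/2) Filter.atTop (nhds 0) := by
      simpa using hmt.sub_const (1/2)
    refine h'.congr fun n => by rw [hma n]; ring
  have hsub : Filter.Tendsto (fun n => a n - 1/2) Filter.atTop (nhds 0) := by
    have hneg : Filter.Tendsto (fun n => -|a n - 1/2|) Filter.atTop (nhds 0) := by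
      simpa using habs.neg
    exact tendsto_of_tendsto_of_tendsto_of_le_of_le hneg habs
      (fun n => neg_abs_le _) (fun n => le_abs_self _)
  have := hsub.add_const (1/2)
  simpa using this
end

section
/- For every measurable set A with 0 < π(A) < 1, one has π(A)π(Aᶜ) k_2(A) ≤ 1 − 2∫_A p(x, Aᶜ) π(dx), where k_2(A) := (1/(π(A)π(Aᶜ))) ∫_A p^2(x, Aᶜ) π(dx) and p^2 is the two-step kernel. -/
open MeasureTheory ProbabilityTheory
open scoped ENNReal

/-- `π(A)π(Aᶜ) k₂(A) ≤ 1 − 2∫_A p(x,Aᶜ) π(dx)`. -/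
theorem two_step_upper_bound {Ω : Type*} [MeasurableSpace Ω] (κ : Kernel Ω Ω)
    [IsMarkovKernel κ] (π : Measure Ω) [IsProbabilityMeasure π]
    (hinv : ∀ B : Set Ω, MeasurableSet B → π B = ∫⁻ x, κ x B ∂π)
    (A : Set Ω) (hA : MeasurableSet A) (h0 : 0 < π A) (h1 : π A < 1) :
    (π A).toReal * (π Aᶜ).toReal * isoQ (kpow κ 2) π A ≤ 1 - 2 * flow κ π A := by
  have hAc : MeasurableSet Aᶜ := hA.compl
  have hmA : Measurable fun y => κ y A := κ.measurable_coe hA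
  have hmAc : Measurable fun y => κ y Aᶜ := κ.measurable_coe hAc
  set F : ℝ≥0∞ := ∫⁻ x in A, κ x Aᶜ ∂π with hFdef
  set Q : ℝ≥0∞ := ∫⁻ x in A, (kpow κ 2) x Aᶜ ∂π with hQdef
  -- kpow κ 2 = κ ∘ₖ κ
  have hk2 : kpow κ 2 = κ ∘ₖ κ := by
    show (kpow κ 1) ∘ₖ κ = κ ∘ₖ κ
    show (Kernel.id ∘ₖ κ) ∘ₖ κ = κ ∘ₖ κ
    rw [Kernel.id_comp]
  -- invariance as bind
  have hbind : π.bind (fun x => κ x) = π := by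
    ext B hB
    rw [Measure.bind_apply hB κ.measurable.aemeasurable]
    exact (hinv B hB).symm
  -- E1 : flow back in = flow out
  have hE1 : ∫⁻ x in Aᶜ, κ x A ∂π = F := by
    have h1' : ∫⁻ x in A, κ x A ∂π + ∫⁻ x in Aᶜ, κ x A ∂π = π A := by
      rw [lintegral_add_compl _ hA]; exact (hinv A hA).symm
    have h2' : ∫⁻ x in A, κ x A ∂π + F = π A := by
      rw [hFdef, ← lintegral_add_left hmA]
      simp only [measure_add_measure_compl hA, measure_univ]
      simp
    have hfin : ∫⁻ x in A, κ x A ∂π ≠ ∞ := by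
      refine ne_top_of_le_ne_top (measure_ne_top π A) ?_
      calc ∫⁻ x in A, κ x A ∂π ≤ ∫⁻ _ in A, 1 ∂π := lintegral_mono fun x => prob_le_one
        _ = π A := by simp
    exact (ENNReal.add_right_inj hfin).mp (h1'.trans h2'.symm)
  -- E2 via bind
  have hE2 : ∫⁻ x, (∫⁻ y, Aᶜ.indicator (fun y => κ y A) y ∂κ x) ∂π = F := by
    have hg : Measurable (Aᶜ.indicator fun y => κ y A) := hmA.indicator hAc
    rw [← Measure.lintegral_bind κ.measurable.aemeasurable hg.aemeasurable, hbind,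
      lintegral_indicator hAc, hE1]
  -- pointwise bound
  have hpt : ∀ x, A.indicator (fun x => ∫⁻ y, κ y Aᶜ ∂κ x) x
      + Aᶜ.indicator (fun x => κ x A) x
      + ∫⁻ y, Aᶜ.indicator (fun y => κ y A) y ∂κ x ≤ 1 := by
    intro x
    by_cases hx : x ∈ A
    · rw [Set.indicator_of_mem hx, Set.indicator_of_notMem (by simp [hx]), add_zero,
        ← lintegral_add_left hmAc]
      calc ∫⁻ y, (κ y Aᶜ + Aᶜ.indicator (fun y => κ y A) y) ∂κ x
          ≤ ∫⁻ _, 1 ∂κ x := by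
            refine lintegral_mono fun y => ?_
            by_cases hy : y ∈ Aᶜ
            · rw [Set.indicator_of_mem hy]
              have := measure_add_measure_compl (μ := κ y) hAc
              rw [compl_compl, measure_univ] at this
              exact this.le
            · rw [Set.indicator_of_notMem hy, add_zero]; exact prob_le_one
        _ = 1 := by simp
    · rw [Set.indicator_of_notMem hx, Set.indicator_of_mem (Set.mem_compl hx), zero_add]
      calc κ x A + ∫⁻ y, Aᶜ.indicator (fun y => κ y A) y ∂κ x
          = κ x A + ∫⁻ y in Aᶜ, κ y A ∂κ x := by rw [lintegral_indicator hAc]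
        _ ≤ κ x A + κ x Aᶜ := by
            gcongr
            calc ∫⁻ y in Aᶜ, κ y A ∂κ x ≤ ∫⁻ _ in Aᶜ, 1 ∂κ x :=
                lintegral_mono fun y => prob_le_one
              _ = κ x Aᶜ := by simp
        _ = 1 := by rw [measure_add_measure_compl hA, measure_univ]
  -- integrate
  have hmT1 : Measurable fun x => ∫⁻ y, κ y Aᶜ ∂κ x := hmAc.lintegral_kernel
  have hmT3 : Measurable fun x => ∫⁻ y, Aᶜ.indicator (fun y => κ y A) y ∂κ x :=
    (hmA.indicator hAc).lintegral_kernel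
  have hmain : Q + F + F ≤ 1 := by
    have hint : ∫⁻ x, (A.indicator (fun x => ∫⁻ y, κ y Aᶜ ∂κ x) x
        + Aᶜ.indicator (fun x => κ x A) x
        + ∫⁻ y, Aᶜ.indicator (fun y => κ y A) y ∂κ x) ∂π ≤ 1 := by
      calc _ ≤ ∫⁻ _, (1 : ℝ≥0∞) ∂π := lintegral_mono hpt
        _ = 1 := by simp
    rw [lintegral_add_right _ hmT3, lintegral_add_right _ (hmA.indicator hAc),
      lintegral_indicator hA, lintegral_indicator hAc, hE1, hE2] at hint
    have hQeq : ∫⁻ x in A, (∫⁻ y, κ y Aᶜ ∂κ x) ∂π = Q := by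
      rw [hQdef, hk2]
      refine setLIntegral_congr_fun hA (fun x _ => ?_)
      rw [Kernel.comp_apply' _ _ _ hAc]
    rwa [hQeq] at hint
  -- finiteness
  have hQle : Q ≤ 1 := le_trans (le_trans (le_add_of_nonneg_right (zero_le))
    (le_add_of_nonneg_right (zero_le) : Q + F ≤ Q + F + F)) hmain
  have hFle : F ≤ 1 := by
    calc F ≤ Q + F + F := by
          calc F ≤ Q + F := le_add_of_nonneg_left (zero_le)
            _ ≤ Q + F + F := le_add_of_nonneg_right (zero_le)
      _ ≤ 1 := hmain
  have hQne : Q ≠ ∞ := ne_top_of_le_ne_top ENNReal.one_ne_top hQle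
  have hFne : F ≠ ∞ := ne_top_of_le_ne_top ENNReal.one_ne_top hFle
  -- real conversion
  have hAne : (π A).toReal ≠ 0 := by
    simp [ENNReal.toReal_ne_zero, h0.ne', measure_ne_top]
  have hAcne : (π Aᶜ).toReal ≠ 0 := by
    have : π Aᶜ ≠ 0 := by
      rw [prob_compl_eq_one_sub hA]
      intro h
      exact h1.not_ge (tsub_eq_zero_iff_le.mp h)
    simp [ENNReal.toReal_ne_zero, this, measure_ne_top]
  have hLHS : (π A).toReal * (π Aᶜ).toReal * isoQ (kpow κ 2) π A = Q.toReal := by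
    rw [isoQ, flow, hQdef]
    field_simp
  rw [hLHS]
  have := ENNReal.toReal_mono ENNReal.one_ne_top hmain
  rw [ENNReal.toReal_add (by finiteness) hFne, ENNReal.toReal_add hQne hFne,
    ENNReal.toReal_one] at this
  show Q.toReal ≤ 1 - 2 * F.toReal
  linarith
end

section
/- If K := sup over measurable A with 0 < π(A) < 1 of k(A) equals 2, then k_2 := inf over such A of k_2(A) equals 0. (Reversibility is not required.) -/
open MeasureTheory ProbabilityTheory

/-- Main measure-theoretic estimate: two-step flow plus twice one-step flow is at most 1. -/
lemma two_step_flow_bound {Ω : Type*} [MeasurableSpace Ω] (κ : Kernel Ω Ω)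
    [IsMarkovKernel κ] (π : Measure Ω) [IsProbabilityMeasure π]
    (hinv : ∀ B : Set Ω, MeasurableSet B → π B = ∫⁻ x, κ x B ∂π)
    (A : Set Ω) (hA : MeasurableSet A) :
    (∫⁻ x in A, (κ ∘ₖ κ) x Aᶜ ∂π) + (∫⁻ x in A, κ x Aᶜ ∂π) + (∫⁻ x in A, κ x Aᶜ ∂π) ≤ 1 := by
  have hbind : π.bind (fun x => κ x) = π :=
    Measure.ext fun B hB => by
      rw [Measure.bind_apply hB (κ.measurable.aemeasurable)]; exact (hinv B hB).symm
  set F := ∫⁻ x in A, κ x Aᶜ ∂π with hF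
  set eA := ∫⁻ x in A, κ x A ∂π with heA
  set ec := ∫⁻ y in Aᶜ, κ y Aᶜ ∂π with hec
  set Fc := ∫⁻ y in Aᶜ, κ y A ∂π with hFc
  have split : ∀ (B : Set Ω), MeasurableSet B →
      (∫⁻ x in B, κ x A ∂π) + (∫⁻ x in B, κ x Aᶜ ∂π) = π B := by
    intro B hB
    rw [← lintegral_add_left (κ.measurable_coe hA)]
    have : ∀ x, κ x A + κ x Aᶜ = 1 := fun x => by
      rw [measure_add_measure_compl hA]; simp
    simp [this]
  have h2 : eA + F = π A := split A hA
  have h3 : Fc + ec = π Aᶜ := split Aᶜ hA.compl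
  have h4 : eA + Fc = π A := by
    have := hinv A hA
    rw [← lintegral_add_compl (fun x => κ x A) hA] at this
    exact this.symm
  have hfmeas : Measurable (Aᶜ.indicator (fun y => κ y Aᶜ)) :=
    (κ.measurable_coe hA.compl).indicator hA.compl
  have step1 : (∫⁻ x in A, (κ ∘ₖ κ) x Aᶜ ∂π) ≤ eA + ec := by
    have hpt : ∀ x, (κ ∘ₖ κ) x Aᶜ ≤ κ x A + ∫⁻ y, Aᶜ.indicator (fun y => κ y Aᶜ) y ∂(κ x) := by
      intro x
      rw [Kernel.comp_apply' _ _ _ hA.compl, ← lintegral_add_compl (fun y => κ y Aᶜ) hA,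
        lintegral_indicator hA.compl]
      gcongr
      calc ∫⁻ y in A, κ y Aᶜ ∂(κ x) ≤ ∫⁻ _ in A, 1 ∂(κ x) := by
            apply lintegral_mono; intro y; exact prob_le_one
        _ = κ x A := by simp
    calc (∫⁻ x in A, (κ ∘ₖ κ) x Aᶜ ∂π)
        ≤ ∫⁻ x in A, (κ x A + ∫⁻ y, Aᶜ.indicator (fun y => κ y Aᶜ) y ∂(κ x)) ∂π :=
          lintegral_mono fun x => hpt x
      _ = eA + ∫⁻ x in A, (∫⁻ y, Aᶜ.indicator (fun y => κ y Aᶜ) y ∂(κ x)) ∂π := by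
          rw [lintegral_add_left (κ.measurable_coe hA)]
      _ ≤ eA + ∫⁻ x, (∫⁻ y, Aᶜ.indicator (fun y => κ y Aᶜ) y ∂(κ x)) ∂π := by
          gcongr; exact Measure.restrict_le_self
      _ = eA + ∫⁻ y, Aᶜ.indicator (fun y => κ y Aᶜ) y ∂π := by
          rw [← Measure.lintegral_bind κ.measurable.aemeasurable hfmeas.aemeasurable, hbind]
      _ = eA + ec := by rw [lintegral_indicator hA.compl]
  have hFFc : F = Fc := by
    have h24 : eA + F = eA + Fc := h2.trans h4.symm
    have heAfin : eA ≠ ⊤ := by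
      have : eA ≤ π A := by
        calc eA ≤ ∫⁻ _ in A, 1 ∂π := lintegral_mono fun x => prob_le_one
          _ = π A := by simp
      exact (this.trans_lt (measure_lt_top π A)).ne
    exact (ENNReal.add_right_inj heAfin).mp h24
  calc (∫⁻ x in A, (κ ∘ₖ κ) x Aᶜ ∂π) + F + F ≤ (eA + ec) + F + F := by gcongr
    _ = (eA + F) + (Fc + ec) := by rw [hFFc]; ring
    _ = π A + π Aᶜ := by rw [h2, h3]
    _ = 1 := by rw [measure_add_measure_compl hA]; simp

/-- If `K = 2` then `k₂ = 0` (no reversibility needed). -/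
theorem k2_eq_zero_of_Ksup_eq_two {Ω : Type*} [MeasurableSpace Ω] (κ : Kernel Ω Ω)
    [IsMarkovKernel κ] (π : Measure Ω) [IsProbabilityMeasure π]
    (hinv : ∀ B : Set Ω, MeasurableSet B → π B = ∫⁻ x, κ x B ∂π)
    (hK : Ksup κ π = 2) :
    kinfN κ π 2 = 0 := by
  have hk2comp : kpow κ 2 = κ ∘ₖ κ := by
    show (kpow κ 1) ∘ₖ κ = κ ∘ₖ κ
    congr 1
    show Kernel.id ∘ₖ κ = κ
    exact Kernel.id_comp κ
  set D := {A : Set Ω | MeasurableSet A ∧ 0 < π A ∧ π A < 1} with hD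
  set S := (fun A => isoQ κ π A) '' D with hS
  have hsup : sSup S = 2 := hK
  have hSne : S.Nonempty := by
    by_contra h
    rw [Set.not_nonempty_iff_eq_empty] at h
    rw [h, Real.sSup_empty] at hsup
    norm_num at hsup
  have hSbdd : BddAbove S := by
    by_contra h
    rw [Real.sSup_of_not_bddAbove h] at hsup
    norm_num at hsup
  have hDne : D.Nonempty := by
    obtain ⟨v, A, hAD, rfl⟩ := hSne
    exact ⟨A, hAD⟩
  -- the inf set is nonempty and bounded below by 0
  have hInfLb : ∀ v ∈ (fun A => isoQ (kpow κ 2) π A) '' D, (0:ℝ) ≤ v := by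
    rintro v ⟨A, _, rfl⟩
    exact div_nonneg ENNReal.toReal_nonneg
      (mul_nonneg ENNReal.toReal_nonneg ENNReal.toReal_nonneg)
  have hInfNe : ((fun A => isoQ (kpow κ 2) π A) '' D).Nonempty := hDne.image _
  have hInfBdd : BddBelow ((fun A => isoQ (kpow κ 2) π A) '' D) := ⟨0, hInfLb⟩
  have h0 : 0 ≤ kinfN κ π 2 := le_csInf hInfNe hInfLb
  -- main estimate
  have key : ∀ δ : ℝ, 0 < δ → δ ≤ 1/2 → kinfN κ π 2 ≤ 24 * δ := by
    intro δ hδ0 hδhalf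
    obtain ⟨v, hvS, hv⟩ := exists_lt_of_lt_csSup hSne (by rw [hsup]; linarith : 2 - δ < sSup S)
    obtain ⟨A, hAD, rfl⟩ := hvS
    obtain ⟨hA, h0A, h1A⟩ := hAD
    set a := (π A).toReal with ha'
    set b := (π Aᶜ).toReal with hb'
    have hab1 : a + b = 1 := by
      rw [ha', hb', ← ENNReal.toReal_add (measure_ne_top π A) (measure_ne_top π Aᶜ),
        measure_add_measure_compl hA]
      simp
    have ha : 0 < a := ENNReal.toReal_pos h0A.ne' (measure_ne_top π A)
    have ha1 : a < 1 := by
      have := (ENNReal.toReal_lt_toReal (measure_ne_top π A) ENNReal.one_ne_top).mpr h1A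
      simpa using this
    have hb : 0 < b := by linarith
    have habpos : 0 < a * b := mul_pos ha hb
    set F := flow κ π A with hFdef
    set F2 := flow (kpow κ 2) π A with hF2def
    have hF2nn : 0 ≤ F2 := ENNReal.toReal_nonneg
    -- F ≤ a
    have hFa : F ≤ a := by
      apply ENNReal.toReal_mono (measure_ne_top π A)
      calc ∫⁻ x in A, κ x Aᶜ ∂π ≤ ∫⁻ _ in A, 1 ∂π := lintegral_mono fun x => prob_le_one
        _ = π A := by simp
    -- F ≤ b
    have hFb : F ≤ b := by
      apply ENNReal.toReal_mono (measure_ne_top π Aᶜ)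
      calc ∫⁻ x in A, κ x Aᶜ ∂π ≤ ∫⁻ x, κ x Aᶜ ∂π := setLIntegral_le_lintegral _ _
        _ = π Aᶜ := (hinv Aᶜ hA.compl).symm
    -- F2 + 2F ≤ 1
    have hsum : F2 + F + F ≤ 1 := by
      have hE := two_step_flow_bound κ π hinv A hA
      have hYfin : (∫⁻ x in A, κ x Aᶜ ∂π) ≠ ⊤ := by
        have hle : ∫⁻ x in A, κ x Aᶜ ∂π ≤ π A := by
          calc ∫⁻ x in A, κ x Aᶜ ∂π ≤ ∫⁻ _ in A, 1 ∂π := lintegral_mono fun x => prob_le_one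
            _ = π A := by simp
        exact (hle.trans_lt (measure_lt_top π A)).ne
      have hXfin : (∫⁻ x in A, (κ ∘ₖ κ) x Aᶜ ∂π) ≠ ⊤ := by
        refine ne_top_of_le_ne_top ENNReal.one_ne_top ?_
        calc (∫⁻ x in A, (κ ∘ₖ κ) x Aᶜ ∂π)
            ≤ (∫⁻ x in A, (κ ∘ₖ κ) x Aᶜ ∂π) + _ + _ := by
              exact le_add_right (le_add_right le_rfl)
          _ ≤ 1 := hE
      have := ENNReal.toReal_mono ENNReal.one_ne_top hE
      rw [ENNReal.toReal_add (by exact ENNReal.add_ne_top.mpr ⟨hXfin, hYfin⟩) hYfin,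
        ENNReal.toReal_add hXfin hYfin, ENNReal.toReal_one] at this
      have hflow2 : F2 = (∫⁻ x in A, (κ ∘ₖ κ) x Aᶜ ∂π).toReal := by
        rw [hF2def, flow, hk2comp]
      rw [hflow2, hFdef, flow]
      exact this
    -- F ≥ (2-δ) a b
    have hFge : (2 - δ) * (a * b) ≤ F := by
      have : 2 - δ < F / (a * b) := hv
      rw [lt_div_iff₀ habpos] at this
      linarith
    -- algebra: F2 ≤ 24 δ a b
    have halg : F2 ≤ 24 * δ * (a * b) := by
      have h1 : (2 - δ) * a ≤ 1 := by nlinarith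
      have h2 : (2 - δ) * b ≤ 1 := by nlinarith
      have hprod : (1 - (2 - δ) * a) * (1 - (2 - δ) * b) ≥ 0 :=
        mul_nonneg (by linarith) (by linarith)
      have hab : (1 - δ) ≤ (2 - δ)^2 * (a * b) := by nlinarith
      have hfin : 1 ≤ (4 + 22 * δ) * (a * b) := by nlinarith [sq_nonneg (2 - δ), habpos]
      nlinarith
    have hmem : isoQ (kpow κ 2) π A ∈ (fun A => isoQ (kpow κ 2) π A) '' D :=
      ⟨A, ⟨hA, h0A, h1A⟩, rfl⟩
    have hle : isoQ (kpow κ 2) π A ≤ 24 * δ := by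
      rw [isoQ, ← ha', ← hb', ← hF2def, div_le_iff₀ habpos]
      calc F2 ≤ 24 * δ * (a * b) := halg
        _ = 24 * δ * (a * b) := rfl
    exact (csInf_le hInfBdd hmem).trans hle
  -- conclude
  by_contra hne
  have hpos : 0 < kinfN κ π 2 := lt_of_le_of_ne h0 (Ne.symm hne)
  have hδ : (0:ℝ) < min (kinfN κ π 2 / 48) (1/2) := by
    apply lt_min (by linarith) (by norm_num)
  have := key _ hδ (min_le_right _ _)
  have h48 : 24 * min (kinfN κ π 2 / 48) (1/2) ≤ 24 * (kinfN κ π 2 / 48) := by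
    have := min_le_left (kinfN κ π 2 / 48) (1/2)
    linarith
  linarith
end

section
/- Suppose 0 < π(A) ≤ 1/2, and with A_{k/4} := {y ∈ A : p(y, Aᶜ) ≥ k/4}, suppose C := A \ A_{k/4} satisfies π(C) ≥ δ π(A) for some δ > 0, where k := inf k(A') > 0. Then k_2(A) ≥ (k²/16) δ. -/
open MeasureTheory ProbabilityTheory
open scoped ENNReal

instance kpow_markov {Ω : Type*} [MeasurableSpace Ω] (κ : Kernel Ω Ω) [IsMarkovKernel κ] :
    ∀ n, IsMarkovKernel (kpow κ n)
  | 0 => by rw [kpow]; infer_instance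
  | n + 1 => by
      rw [kpow]
      have := kpow_markov κ n
      infer_instance

lemma kpow_one {Ω : Type*} [MeasurableSpace Ω] (κ : Kernel Ω Ω) : kpow κ 1 = κ := by
  simp [kpow, Kernel.id_comp]

lemma setLint_le_one {Ω : Type*} [MeasurableSpace Ω] (κ : Kernel Ω Ω) [IsMarkovKernel κ]
    (π : Measure Ω) [IsProbabilityMeasure π] (T s : Set Ω) :
    ∫⁻ x in T, κ x s ∂π ≤ 1 := by
  calc ∫⁻ x in T, κ x s ∂π ≤ ∫⁻ _ in T, 1 ∂π := lintegral_mono fun x => prob_le_one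
    _ = π T := by simp
    _ ≤ 1 := prob_le_one

lemma setLint_ne_top {Ω : Type*} [MeasurableSpace Ω] (κ : Kernel Ω Ω) [IsMarkovKernel κ]
    (π : Measure Ω) [IsProbabilityMeasure π] (T s : Set Ω) :
    ∫⁻ x in T, κ x s ∂π ≠ ⊤ :=
  ((setLint_le_one κ π T s).trans_lt ENNReal.one_lt_top).ne

/-- First case of the main lemma: if `π(C) ≥ δ π(A)` where
`C = A \ A_{k/4}`, then `k₂(A) ≥ (k²/16) δ`. -/
theorem k2_lower_bound_case_one {Ω : Type*} [MeasurableSpace Ω] (κ : Kernel Ω Ω)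
    [IsMarkovKernel κ] (π : Measure Ω) [IsProbabilityMeasure π]
    (hinv : ∀ B : Set Ω, MeasurableSet B → π B = ∫⁻ x, κ x B ∂π)
    (hrev : Reversible κ π)
    (hk : 0 < kinfN κ π 1)
    (A : Set Ω) (hA : MeasurableSet A) (h0 : 0 < π A) (h12 : π A ≤ 1 / 2)
    (δ : ℝ) (hδ : 0 < δ)
    (hC : (π (A \ {y ∈ A | kinfN κ π 1 / 4 ≤ (κ y Aᶜ).toReal})).toReal ≥
      δ * (π A).toReal) :
    isoQ (kpow κ 2) π A ≥ (kinfN κ π 1) ^ 2 / 16 * δ := by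
  set k : ℝ := kinfN κ π 1 with hkdef
  set B : Set Ω := {y ∈ A | k / 4 ≤ (κ y Aᶜ).toReal} with hBdef
  set C : Set Ω := A \ B with hCdef
  have hBmeas : MeasurableSet B :=
    hA.inter (measurableSet_le measurable_const (κ.measurable_coe hA.compl).ennreal_toReal)
  have hCmeas : MeasurableSet C := hA.diff hBmeas
  have hCsubA : C ⊆ A := Set.diff_subset
  have hBsubA : B ⊆ A := fun y hy => hy.1
  -- real-valued measures
  have hπAne : π A ≠ ⊤ := (h12.trans_lt (by norm_num)).ne
  have hπA_pos : 0 < (π A).toReal := ENNReal.toReal_pos h0.ne' hπAne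
  have hπC_pos : 0 < (π C).toReal := lt_of_lt_of_le (by positivity) hC
  have hπCne : π C ≠ ⊤ := ((measure_mono hCsubA).trans_lt (lt_of_le_of_ne le_top hπAne)).ne
  have hπC0 : 0 < π C := by
    rcases eq_or_lt_of_le (zero_le : 0 ≤ π C) with h | h
    · rw [← h] at hπC_pos; simp at hπC_pos
    · exact h
  have hπC1 : π C < 1 := lt_of_le_of_lt (measure_mono hCsubA)
    (lt_of_le_of_lt h12 (by norm_num))
  -- π Cᶜ ≥ 1/2
  have hAcCc : Aᶜ ⊆ Cᶜ := Set.compl_subset_compl.mpr hCsubA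
  have hπAc : (1 : ℝ≥0∞) / 2 ≤ π Aᶜ := by
    have := prob_compl_eq_one_sub hA (μ := π)
    rw [this]
    have : (1:ℝ≥0∞) - 1/2 ≤ 1 - π A := tsub_le_tsub_left h12 1
    simpa using this
  have hπCc_half : (1 : ℝ) / 2 ≤ (π Cᶜ).toReal := by
    have h1 : (1:ℝ≥0∞)/2 ≤ π Cᶜ := hπAc.trans (measure_mono hAcCc)
    have := ENNReal.toReal_mono (measure_ne_top π Cᶜ) h1
    simpa using this
  -- k ≤ isoQ κ π C
  have hk_le : k ≤ isoQ κ π C := by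
    have hmem : isoQ κ π C ∈ ((fun A => isoQ (kpow κ 1) π A) ''
        {A : Set Ω | MeasurableSet A ∧ 0 < π A ∧ π A < 1}) := by
      rw [kpow_one]
      exact ⟨C, ⟨hCmeas, hπC0, hπC1⟩, rfl⟩
    refine csInf_le ⟨0, ?_⟩ hmem
    rintro x ⟨S, -, rfl⟩
    exact div_nonneg ENNReal.toReal_nonneg (by positivity)
  -- flow κ π C ≥ k * (π C * π Cᶜ)
  have hπCc_pos : 0 < (π Cᶜ).toReal := lt_of_lt_of_le (by norm_num) hπCc_half
  have hflowC : k * ((π C).toReal * (π Cᶜ).toReal) ≤ flow κ π C := by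
    have := (le_div_iff₀ (by positivity)).mp hk_le
    linarith [this]
  have hflowC2 : k * (π C).toReal / 2 ≤ flow κ π C := by
    have h1 : k * ((π C).toReal * (1/2)) ≤ k * ((π C).toReal * (π Cᶜ).toReal) := by
      apply mul_le_mul_of_nonneg_left _ hk.le
      apply mul_le_mul_of_nonneg_left hπCc_half ENNReal.toReal_nonneg
    nlinarith
  -- decompose flow κ π C = Q(C,B) + Q(C,Aᶜ)
  have hCc_split : ∀ x, κ x Cᶜ = κ x B + κ x Aᶜ := by
    intro x
    have hunion : Cᶜ = B ∪ Aᶜ := by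
      rw [hCdef, Set.diff_eq, Set.compl_inter, compl_compl, Set.union_comm]
    rw [hunion, measure_union _ hA.compl]
    exact Set.disjoint_compl_right_iff_subset.mpr hBsubA
  have hsplit : ∫⁻ x in C, κ x Cᶜ ∂π
      = (∫⁻ x in C, κ x B ∂π) + ∫⁻ x in C, κ x Aᶜ ∂π := by
    rw [← lintegral_add_left (κ.measurable_coe hBmeas)]
    exact lintegral_congr fun x => hCc_split x
  -- Q(C, Aᶜ) ≤ (k/4) π C
  have hQCAc : (∫⁻ x in C, κ x Aᶜ ∂π).toReal ≤ k / 4 * (π C).toReal := by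
    have hle : ∫⁻ x in C, κ x Aᶜ ∂π ≤ ENNReal.ofReal (k/4) * π C := by
      calc ∫⁻ x in C, κ x Aᶜ ∂π ≤ ∫⁻ _ in C, ENNReal.ofReal (k/4) ∂π := by
            apply setLIntegral_mono' hCmeas
            intro x hx
            refine (ENNReal.le_ofReal_iff_toReal_le (measure_ne_top _ _) (by positivity)).mpr ?_
            have : ¬ (k / 4 ≤ (κ x Aᶜ).toReal) := fun h => hx.2 ⟨hx.1, h⟩
            linarith
        _ = ENNReal.ofReal (k/4) * π C := by simp [mul_comm]
    have := ENNReal.toReal_mono (by finiteness) hle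
    calc (∫⁻ x in C, κ x Aᶜ ∂π).toReal ≤ (ENNReal.ofReal (k/4) * π C).toReal := this
      _ = k / 4 * (π C).toReal := by
          rw [ENNReal.toReal_mul, ENNReal.toReal_ofReal (by positivity)]
  -- hence Q(C,B) ≥ (k/4) π C
  have hQCB : k / 4 * (π C).toReal ≤ (∫⁻ x in C, κ x B ∂π).toReal := by
    have hadd : flow κ π C = (∫⁻ x in C, κ x B ∂π).toReal + (∫⁻ x in C, κ x Aᶜ ∂π).toReal := by
      rw [flow, hsplit, ENNReal.toReal_add (setLint_ne_top κ π C B) (setLint_ne_top κ π C Aᶜ)]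
    nlinarith [hflowC2, hQCAc]
  -- two-step flow bound
  have hk2pt : ∀ x, ENNReal.ofReal (k/4) * κ x B ≤ (kpow κ 2) x Aᶜ := by
    intro x
    have h2 : (kpow κ 2) x Aᶜ = ∫⁻ y, κ y Aᶜ ∂(κ x) := by
      have : kpow κ 2 = κ ∘ₖ κ := by
        show (kpow κ 1) ∘ₖ κ = κ ∘ₖ κ
        rw [kpow_one]
      rw [this, Kernel.comp_apply' _ _ _ hA.compl]
    rw [h2]
    calc ENNReal.ofReal (k/4) * κ x B = ∫⁻ _ in B, ENNReal.ofReal (k/4) ∂(κ x) := by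
          simp [mul_comm]
      _ ≤ ∫⁻ y in B, κ y Aᶜ ∂(κ x) := by
          apply setLIntegral_mono' hBmeas
          intro y hy
          exact ENNReal.ofReal_le_of_le_toReal hy.2
      _ ≤ ∫⁻ y, κ y Aᶜ ∂(κ x) := setLIntegral_le_lintegral _ _
  have hflow2 : k / 4 * (∫⁻ x in C, κ x B ∂π).toReal ≤ flow (kpow κ 2) π A := by
    have hle : ENNReal.ofReal (k/4) * ∫⁻ x in C, κ x B ∂π ≤ ∫⁻ x in A, (kpow κ 2) x Aᶜ ∂π := by
      calc ENNReal.ofReal (k/4) * ∫⁻ x in C, κ x B ∂π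
          = ∫⁻ x in C, ENNReal.ofReal (k/4) * κ x B ∂π := by
            rw [lintegral_const_mul _ (κ.measurable_coe hBmeas)]
        _ ≤ ∫⁻ x in C, (kpow κ 2) x Aᶜ ∂π := lintegral_mono fun x => hk2pt x
        _ ≤ ∫⁻ x in A, (kpow κ 2) x Aᶜ ∂π := by
            apply lintegral_mono_set hCsubA
    have := ENNReal.toReal_mono (setLint_ne_top _ π A Aᶜ) hle
    calc k / 4 * (∫⁻ x in C, κ x B ∂π).toReal
        = (ENNReal.ofReal (k/4) * ∫⁻ x in C, κ x B ∂π).toReal := by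
          rw [ENNReal.toReal_mul, ENNReal.toReal_ofReal (by positivity)]
      _ ≤ flow (kpow κ 2) π A := this
  -- put it together
  have hq2 : k ^ 2 / 16 * (δ * (π A).toReal) ≤ flow (kpow κ 2) π A := by
    have h1 : k/4 * (k/4 * (π C).toReal) ≤ k/4 * (∫⁻ x in C, κ x B ∂π).toReal :=
      mul_le_mul_of_nonneg_left hQCB (by positivity)
    nlinarith [hflow2, hC, hπC_pos]
  have hπAc_pos : 0 < (π Aᶜ).toReal := by
    have := ENNReal.toReal_mono (measure_ne_top π Aᶜ) hπAc
    simp only [ENNReal.toReal_div, ENNReal.toReal_one] at this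
    norm_num at this ⊢
    linarith [this]
  rw [ge_iff_le, isoQ, le_div_iff₀ (mul_pos hπA_pos hπAc_pos)]
  have hπAc_le1 : (π Aᶜ).toReal ≤ 1 := by
    have := prob_le_one (μ := π) (s := Aᶜ)
    simpa using ENNReal.toReal_mono (by norm_num) this
  have hnn : 0 ≤ k ^ 2 / 16 * δ * (π A).toReal :=
    mul_nonneg (mul_nonneg (by positivity) hδ.le) ENNReal.toReal_nonneg
  have h3 : k ^ 2 / 16 * δ * ((π A).toReal * (π Aᶜ).toReal) ≤ k ^ 2 / 16 * δ * (π A).toReal := by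
    rw [← mul_assoc]
    exact mul_le_of_le_one_right hnn hπAc_le1
  nlinarith [hq2, h3]
end

section
/- Under the case assumptions π(C) ≤ δ π(A) and π(B_{ε₁}) ≥ ε₂ π(A_{k/4}), where A_{k/4} := {y ∈ A : p(y, Aᶜ) ≥ k/4}, C := A \ A_{k/4}, and B_{ε₁} := {x ∈ A_{k/4} : p(x, Aᶜ) < 1 − ε₁}, one has k_2(A) ≥ (k/4)(ε₁ ε₂ (1 − δ) − δ). -/
open MeasureTheory ProbabilityTheory

/-- Second case of the main lemma: if `π(C) ≤ δ π(A)` and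
`π(B_{ε₁}) ≥ ε₂ π(A_{k/4})`, then `k₂(A) ≥ (k/4)(ε₁ε₂(1−δ) − δ)`. -/
theorem k2_lower_bound_case_two {Ω : Type*} [MeasurableSpace Ω] (κ : Kernel Ω Ω)
    [IsMarkovKernel κ] (π : Measure Ω) [IsProbabilityMeasure π]
    (hinv : ∀ B : Set Ω, MeasurableSet B → π B = ∫⁻ x, κ x B ∂π)
    (hrev : Reversible κ π)
    (hk : 0 < kinfN κ π 1)
    (A : Set Ω) (hA : MeasurableSet A) (h0 : 0 < π A) (h12 : π A ≤ 1 / 2)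
    (δ ε₁ ε₂ : ℝ) (hδ : 0 < δ) (hε₁ : 0 < ε₁) (hε₂ : 0 < ε₂)
    (hC : (π (A \ {y ∈ A | kinfN κ π 1 / 4 ≤ (κ y Aᶜ).toReal})).toReal ≤
      δ * (π A).toReal)
    (hB : (π {x ∈ {y ∈ A | kinfN κ π 1 / 4 ≤ (κ y Aᶜ).toReal} |
        (κ x Aᶜ).toReal < 1 - ε₁}).toReal ≥
      ε₂ * (π {y ∈ A | kinfN κ π 1 / 4 ≤ (κ y Aᶜ).toReal}).toReal) :
    isoQ (kpow κ 2) π A ≥ kinfN κ π 1 / 4 * (ε₁ * ε₂ * (1 - δ) - δ) := by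
  classical
  set k := kinfN κ π 1 with hkdef
  set A' : Set Ω := {y ∈ A | k / 4 ≤ (κ y Aᶜ).toReal} with hA'def
  set C : Set Ω := A \ A' with hCdef
  set B : Set Ω := {x ∈ A' | (κ x Aᶜ).toReal < 1 - ε₁} with hBdef
  have hmf : Measurable fun y => (κ y Aᶜ).toReal :=
    (κ.measurable_coe hA.compl).ennreal_toReal
  have mA' : MeasurableSet A' := hA.inter (measurableSet_le measurable_const hmf)
  have mC : MeasurableSet C := hA.diff mA'
  have mB : MeasurableSet B := mA'.inter (measurableSet_lt hmf measurable_const)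
  have hsubA' : A' ⊆ A := fun y hy => hy.1
  have hsubB : B ⊆ A := fun x hx => hsubA' hx.1
  have hk1 : kpow κ 1 = κ := by
    show Kernel.id ∘ₖ κ = κ
    exact Kernel.id_comp κ
  have hkpow2 : ∀ x, (kpow κ 2) x Aᶜ = ∫⁻ y, κ y Aᶜ ∂(κ x) := by
    intro x
    show ((kpow κ 1) ∘ₖ κ) x Aᶜ = _
    rw [hk1, Kernel.comp_apply' _ _ _ hA.compl]
  -- abbreviations
  set c : ENNReal := ENNReal.ofReal (k / 4) with hcdef
  set e1 : ENNReal := ENNReal.ofReal ε₁ with he1def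
  -- pointwise bound on A'
  have hA'pt : ∀ y ∈ A', c ≤ κ y Aᶜ := by
    intro y hy
    exact (ENNReal.ofReal_le_of_le_toReal hy.2)
  -- step: kpow 2 lower bound
  have hpt2 : ∀ x, c * κ x A' ≤ (kpow κ 2) x Aᶜ := by
    intro x
    rw [hkpow2 x]
    calc c * κ x A' = ∫⁻ _ in A', c ∂(κ x) := (setLIntegral_const A' c).symm
      _ ≤ ∫⁻ y in A', κ y Aᶜ ∂(κ x) :=
        setLIntegral_mono' mA' (fun y hy => hA'pt y hy)
      _ ≤ ∫⁻ y, κ y Aᶜ ∂(κ x) := setLIntegral_le_lintegral _ _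
  have hstep1 : c * ∫⁻ x in B, κ x A' ∂π ≤ ∫⁻ x in A, (kpow κ 2) x Aᶜ ∂π := by
    calc c * ∫⁻ x in B, κ x A' ∂π = ∫⁻ x in B, c * κ x A' ∂π :=
        (lintegral_const_mul c (κ.measurable_coe mA')).symm
      _ ≤ ∫⁻ x in B, (kpow κ 2) x Aᶜ ∂π := lintegral_mono fun x => hpt2 x
      _ ≤ ∫⁻ x in A, (kpow κ 2) x Aᶜ ∂π := lintegral_mono_set hsubB
  -- on B, κ x A ≥ ε₁
  have hBpt : ∀ x ∈ B, e1 ≤ κ x A := by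
    intro x hx
    have h1 : κ x A + κ x Aᶜ = 1 := by
      rw [measure_add_measure_compl hA]
      exact measure_univ
    have hfin : κ x A ≠ ⊤ := measure_ne_top _ _
    have hfinc : κ x Aᶜ ≠ ⊤ := measure_ne_top _ _
    have h2 : (κ x A).toReal + (κ x Aᶜ).toReal = 1 := by
      rw [← ENNReal.toReal_add hfin hfinc, h1, ENNReal.toReal_one]
    have h3 : ε₁ ≤ (κ x A).toReal := by
      have := hx.2
      linarith
    exact ENNReal.ofReal_le_of_le_toReal h3
  -- κ x A ≤ κ x A' + κ x C
  have hAsplit : ∀ x, κ x A ≤ κ x A' + κ x C := by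
    intro x
    have : A ⊆ A' ∪ C := by
      intro y hy
      by_cases h : y ∈ A'
      · exact Or.inl h
      · exact Or.inr ⟨hy, h⟩
    exact le_trans (measure_mono this) (measure_union_le _ _)
  have hstep2 : e1 * π B ≤ (∫⁻ x in B, κ x A' ∂π) + π C := by
    calc e1 * π B = ∫⁻ _ in B, e1 ∂π := (setLIntegral_const B e1).symm
      _ ≤ ∫⁻ x in B, κ x A ∂π := setLIntegral_mono' mB hBpt
      _ ≤ ∫⁻ x in B, (κ x A' + κ x C) ∂π :=
        setLIntegral_mono' mB (fun x _ => hAsplit x)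
      _ = (∫⁻ x in B, κ x A' ∂π) + ∫⁻ x in B, κ x C ∂π :=
        lintegral_add_right _ (κ.measurable_coe mC)
      _ ≤ (∫⁻ x in B, κ x A' ∂π) + π C := by
        gcongr
        calc ∫⁻ x in B, κ x C ∂π = ∫⁻ x in C, κ x B ∂π := hrev B C mB mC
          _ ≤ ∫⁻ _ in C, 1 ∂π := setLIntegral_mono' mC (fun x _ => prob_le_one)
          _ = π C := setLIntegral_one C
  -- combine in ENNReal
  have hmain : c * (e1 * π B - π C) ≤ ∫⁻ x in A, (kpow κ 2) x Aᶜ ∂π := by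
    refine le_trans ?_ hstep1
    gcongr
    exact tsub_le_iff_right.mpr hstep2
  -- finiteness of flow2
  have hfin2 : (∫⁻ x in A, (kpow κ 2) x Aᶜ ∂π) ≠ ⊤ := by
    refine ne_top_of_le_ne_top (measure_ne_top π A) ?_
    calc ∫⁻ x in A, (kpow κ 2) x Aᶜ ∂π ≤ ∫⁻ _ in A, 1 ∂π := by
          refine setLIntegral_mono' hA (fun x _ => ?_)
          rw [hkpow2 x]
          calc ∫⁻ y, κ y Aᶜ ∂(κ x) ≤ ∫⁻ _, 1 ∂(κ x) :=
              lintegral_mono (fun y => prob_le_one)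
            _ = 1 := by simp
      _ = π A := setLIntegral_one A
  -- pass to reals
  have hk4 : (0:ℝ) < k / 4 := by linarith
  have hflowR : k / 4 * (ε₁ * (π B).toReal - (π C).toReal) ≤ flow (kpow κ 2) π A := by
    have h1 : (c * (e1 * π B - π C)).toReal ≤ flow (kpow κ 2) π A := by
      unfold flow
      exact ENNReal.toReal_mono hfin2 hmain
    refine le_trans ?_ h1
    rw [ENNReal.toReal_mul]
    have hc : c.toReal = k / 4 := ENNReal.toReal_ofReal hk4.le
    rw [hc]
    have h2 : ε₁ * (π B).toReal - (π C).toReal ≤ (e1 * π B - π C).toReal := by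
      refine le_trans ?_ (ENNReal.le_toReal_sub (measure_ne_top π C))
      rw [ENNReal.toReal_mul, ENNReal.toReal_ofReal hε₁.le]
    nlinarith [ENNReal.toReal_nonneg (a := e1 * π B - π C)]
  -- real-side arithmetic
  have hπA'C : (π A').toReal + (π C).toReal = (π A).toReal := by
    have := measure_inter_add_diff (μ := π) A mA'
    rw [Set.inter_eq_self_of_subset_right hsubA'] at this
    rw [← ENNReal.toReal_add (measure_ne_top π A') (measure_ne_top π C), this]
  have haC : (π Aᶜ).toReal ≤ 1 := by
    have : π Aᶜ ≤ 1 := prob_le_one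
    calc (π Aᶜ).toReal ≤ (1:ENNReal).toReal := ENNReal.toReal_mono ENNReal.one_ne_top this
      _ = 1 := ENNReal.toReal_one
  have haCpos : 0 < (π Aᶜ).toReal := by
    have h2 : π A < 1 := lt_of_le_of_lt h12 (by norm_num)
    have : 0 < π Aᶜ := by
      rw [measure_compl hA (measure_ne_top π A)]
      simpa [measure_univ] using h2
    exact ENNReal.toReal_pos this.ne' (measure_ne_top π Aᶜ)
  have haPos : 0 < (π A).toReal := ENNReal.toReal_pos h0.ne' (measure_ne_top π A)
  -- chain of real inequalities
  have hA'lb : (1 - δ) * (π A).toReal ≤ (π A').toReal := by nlinarith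
  have hBlb : ε₂ * (π A').toReal ≤ (π B).toReal := hB
  have key : k / 4 * ((ε₁ * ε₂ * (1 - δ) - δ) * (π A).toReal) ≤ flow (kpow κ 2) π A := by
    refine le_trans ?_ hflowR
    have h1 : ε₁ * ε₂ * ((1 - δ) * (π A).toReal) ≤ ε₁ * (π B).toReal := by
      calc ε₁ * ε₂ * ((1 - δ) * (π A).toReal) ≤ ε₁ * ε₂ * (π A').toReal := by
            exact mul_le_mul_of_nonneg_left hA'lb (by positivity)
        _ = ε₁ * (ε₂ * (π A').toReal) := by ring
        _ ≤ ε₁ * (π B).toReal := mul_le_mul_of_nonneg_left hBlb hε₁.le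
    nlinarith
  -- finish
  unfold isoQ
  set E : ℝ := ε₁ * ε₂ * (1 - δ) - δ with hEdef
  rcases le_or_gt E 0 with hE | hE
  · have hL : 0 ≤ flow (kpow κ 2) π A / ((π A).toReal * (π Aᶜ).toReal) := by
      apply div_nonneg
      · exact ENNReal.toReal_nonneg
      · positivity
    nlinarith
  · rw [ge_iff_le, le_div_iff₀ (mul_pos haPos haCpos)]
    have h5 : k / 4 * E * ((π A).toReal * (π Aᶜ).toReal)
        = (k / 4 * E * (π A).toReal) * (π Aᶜ).toReal := by ring
    have h6 : (k / 4 * E * (π A).toReal) * (π Aᶜ).toReal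
        ≤ (k / 4 * E * (π A).toReal) * 1 :=
      mul_le_mul_of_nonneg_left haC (by positivity)
    nlinarith [key]
end

section
/- Let H_ε := {y ∈ Aᶜ : p(y, Aᶜ) ≥ ε} for 0 < ε < 1. Then π(H_εᶜ ∩ Aᶜ) ≤ π(A)/(1 − ε). -/
open MeasureTheory ProbabilityTheory

/-- With `H_ε := {y ∈ Aᶜ : p(y, Aᶜ) ≥ ε}`, one has
`π(H_εᶜ ∩ Aᶜ) ≤ π(A)/(1 − ε)`. -/
theorem measure_H_compl_inter_le {Ω : Type*} [MeasurableSpace Ω] (κ : Kernel Ω Ω)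
    [IsMarkovKernel κ] (π : Measure Ω) [IsProbabilityMeasure π]
    (hinv : ∀ B : Set Ω, MeasurableSet B → π B = ∫⁻ x, κ x B ∂π)
    (hrev : Reversible κ π)
    (A : Set Ω) (hA : MeasurableSet A) (h0 : 0 < π A) (h1 : π A < 1)
    (ε : ℝ) (hε : 0 < ε) (hε1 : ε < 1) :
    (π ({y ∈ Aᶜ | ε ≤ (κ y Aᶜ).toReal}ᶜ ∩ Aᶜ)).toReal ≤ (π A).toReal / (1 - ε) := by

  set S : Set Ω := {y ∈ Aᶜ | ε ≤ (κ y Aᶜ).toReal}ᶜ ∩ Aᶜ with hS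
  have hSmeas : MeasurableSet S := by
    apply MeasurableSet.inter _ hA.compl
    apply MeasurableSet.compl
    exact hA.compl.inter (measurableSet_le measurable_const
      ((κ.measurable_coe hA.compl).ennreal_toReal))
  -- on S, κ y A ≥ 1 - ε
  have key : ∀ y ∈ S, ENNReal.ofReal (1 - ε) ≤ κ y A := by
    intro y hy
    obtain ⟨hy1, hy2⟩ := hy
    simp only [Set.mem_compl_iff, Set.mem_setOf_eq, not_and, not_le] at hy1
    have hlt : (κ y Aᶜ).toReal < ε := hy1 hy2
    have hfin : κ y Aᶜ ≠ ⊤ := (measure_ne_top _ _)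
    have hlt' : κ y Aᶜ < ENNReal.ofReal ε := by
      rwa [← ENNReal.ofReal_toReal hfin, ENNReal.ofReal_lt_ofReal_iff hε]
    have hsum : κ y A + κ y Aᶜ = 1 := by
      rw [← measure_union (disjoint_compl_right) hA.compl, Set.union_compl_self]
      exact measure_univ
    have : ENNReal.ofReal (1 - ε) = 1 - ENNReal.ofReal ε := by
      rw [ENNReal.ofReal_sub _ hε.le, ENNReal.ofReal_one]
    rw [this]
    have : κ y A = 1 - κ y Aᶜ := by
      rw [← hsum]; simp [ENNReal.add_sub_cancel_right hfin]
    rw [this]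
    exact tsub_le_tsub_left hlt'.le 1
  have h1ε : (0:ℝ) < 1 - ε := by linarith
  -- (1-ε) * π S ≤ ∫_S κ y A dπ
  have step1 : ENNReal.ofReal (1 - ε) * π S ≤ ∫⁻ y in S, κ y A ∂π := by
    calc ENNReal.ofReal (1 - ε) * π S = ∫⁻ _ in S, ENNReal.ofReal (1 - ε) ∂π := by
          rw [setLIntegral_const, mul_comm]
      _ ≤ ∫⁻ y in S, κ y A ∂π := setLIntegral_mono' hSmeas key
  have step2 : ∫⁻ y in S, κ y A ∂π ≤ ∫⁻ y in Aᶜ, κ y A ∂π := by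
    apply lintegral_mono_set (Set.inter_subset_right)
  have step3 : ∫⁻ y in Aᶜ, κ y A ∂π = ∫⁻ x in A, κ x Aᶜ ∂π := hrev Aᶜ A hA.compl hA
  have step4 : ∫⁻ x in A, κ x Aᶜ ∂π ≤ π A := by
    calc ∫⁻ x in A, κ x Aᶜ ∂π ≤ ∫⁻ _ in A, 1 ∂π :=
          setLIntegral_mono' hA (fun x _ => prob_le_one)
      _ = π A := by simp
  have main : ENNReal.ofReal (1 - ε) * π S ≤ π A :=
    le_trans step1 (le_trans step2 (step3 ▸ step4))
  have hdiv : π S ≤ π A / ENNReal.ofReal (1 - ε) := by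
    rw [ENNReal.le_div_iff_mul_le (Or.inl (by simp only [ne_eq, ENNReal.ofReal_eq_zero, not_le]; linarith)) (Or.inl ENNReal.ofReal_ne_top)]
    rwa [mul_comm]
  have := ENNReal.toReal_mono (by
    simp [ENNReal.div_eq_top, measure_ne_top, ne_of_gt h1ε, hε1]) hdiv
  rwa [ENNReal.toReal_div, ENNReal.toReal_ofReal h1ε.le] at this
end

section
/- Let H_ε := {y ∈ Aᶜ : p(y, Aᶜ) ≥ ε} and L := (1/(π(A)π(Aᶜ))) ∫_A p(x, H_ε) π(dx). Then L ≥ π(H_ε)·k − ε·π(H_εᶜ ∩ Aᶜ)/π(A), where k := inf over measurable sets of the isoperimetric quantity. -/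
open MeasureTheory ProbabilityTheory

/-- With `H_ε := {y ∈ Aᶜ : p(y, Aᶜ) ≥ ε}` and
`L := (1/(π(A)π(Aᶜ))) ∫_A p(x, H_ε) π(dx)`, one has
`L ≥ π(H_ε)·k − ε·π(H_εᶜ ∩ Aᶜ)/π(A)`. -/
theorem flow_into_H_lower_bound {Ω : Type*} [MeasurableSpace Ω] (κ : Kernel Ω Ω)
    [IsMarkovKernel κ] (π : Measure Ω) [IsProbabilityMeasure π]
    (hinv : ∀ B : Set Ω, MeasurableSet B → π B = ∫⁻ x, κ x B ∂π)
    (hrev : Reversible κ π)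
    (A : Set Ω) (hA : MeasurableSet A) (h0 : 0 < π A) (h1 : π A < 1)
    (ε : ℝ) (hε : 0 < ε) (hε1 : ε < 1)
    (hH : 0 < π {y ∈ Aᶜ | ε ≤ (κ y Aᶜ).toReal})
    (hU : π (A ∪ {y ∈ Aᶜ | ε ≤ (κ y Aᶜ).toReal}ᶜ) < 1) :
    (∫⁻ x in A, κ x {y ∈ Aᶜ | ε ≤ (κ y Aᶜ).toReal} ∂π).toReal /
        ((π A).toReal * (π Aᶜ).toReal) ≥
      (π {y ∈ Aᶜ | ε ≤ (κ y Aᶜ).toReal}).toReal * kinfN κ π 1 -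
        ε * (π ({y ∈ Aᶜ | ε ≤ (κ y Aᶜ).toReal}ᶜ ∩ Aᶜ)).toReal / (π A).toReal := by
  set H : Set Ω := {y ∈ Aᶜ | ε ≤ (κ y Aᶜ).toReal} with hHdef
  have hHm : MeasurableSet H := by
    have : H = Aᶜ ∩ {y | ε ≤ (κ y Aᶜ).toReal} := rfl
    rw [this]
    exact hA.compl.inter
      (measurableSet_le measurable_const ((κ.measurable_coe hA.compl).ennreal_toReal))
  have hHsub : H ⊆ Aᶜ := fun y hy => hy.1
  have hAsub : A ⊆ Hᶜ := fun x hx hxH => hHsub hxH hx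
  set G : Set Ω := Hᶜ ∩ Aᶜ with hGdef
  have hGm : MeasurableSet G := hHm.compl.inter hA.compl
  -- basic measure facts
  have hπA_ne : π A ≠ ⊤ := measure_ne_top π A
  have hπAc : π Aᶜ = 1 - π A := prob_compl_eq_one_sub hA
  have h0Ac : 0 < π Aᶜ := by
    rw [hπAc]
    exact tsub_pos_of_lt h1
  have hH1 : π H < 1 := lt_of_le_of_lt (measure_mono hHsub)
    (by rw [hπAc]; exact ENNReal.sub_lt_self ENNReal.one_ne_top one_ne_zero h0.ne')
  -- reals
  set a := (π A).toReal with ha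
  set ac := (π Aᶜ).toReal with hac
  set h := (π H).toReal with hh
  set hc := (π Hᶜ).toReal with hhc
  set g := (π G).toReal with hg
  have ha0 : 0 < a := ENNReal.toReal_pos h0.ne' hπA_ne
  have hac0 : 0 < ac := ENNReal.toReal_pos h0Ac.ne' (measure_ne_top _ _)
  have hac1 : ac ≤ 1 := by
    rw [hac]
    exact ENNReal.toReal_le_of_le_ofReal one_pos.le (by simpa using prob_le_one)
  have hh0 : 0 < h := ENNReal.toReal_pos hH.ne' (measure_ne_top _ _)
  have hhc0 : 0 < hc := by
    refine ENNReal.toReal_pos ?_ (measure_ne_top _ _)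
    intro hz
    have := measure_mono (μ := π) hAsub
    rw [hz] at this
    exact absurd (le_antisymm this zero_le) h0.ne'
  have hahc : a ≤ hc := ENNReal.toReal_mono (measure_ne_top _ _) (measure_mono hAsub)
  have hg0 : 0 ≤ g := ENNReal.toReal_nonneg
  -- k ≥ 0 and k ≤ isoQ (kpow κ 1) π H
  set k := kinfN κ π 1 with hkdef
  have hk0 : 0 ≤ k := Real.sInf_nonneg (by
    rintro x ⟨B, hB, rfl⟩
    exact div_nonneg ENNReal.toReal_nonneg (mul_nonneg ENNReal.toReal_nonneg ENNReal.toReal_nonneg))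
  have hkpow1 : kpow κ 1 = κ := by
    show Kernel.id ∘ₖ κ = κ
    exact Kernel.id_comp κ
  have hkle : k ≤ isoQ κ π H := by
    rw [hkdef, kinfN]
    have hmem : isoQ κ π H ∈ ((fun B => isoQ (kpow κ 1) π B) ''
        {B : Set Ω | MeasurableSet B ∧ 0 < π B ∧ π B < 1}) :=
      ⟨H, ⟨hHm, hH, hH1⟩, by rw [hkpow1]⟩
    refine csInf_le ⟨0, ?_⟩ hmem
    rintro x ⟨B, hB, rfl⟩
    exact div_nonneg ENNReal.toReal_nonneg (mul_nonneg ENNReal.toReal_nonneg ENNReal.toReal_nonneg)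
  -- integrals
  have hbound : ∀ (S B : Set Ω), ∫⁻ x in S, κ x B ∂π ≠ ⊤ := by
    intro S B
    have : ∫⁻ x in S, κ x B ∂π ≤ ∫⁻ _ in S, 1 ∂π :=
      lintegral_mono fun x => prob_le_one
    rw [setLIntegral_const] at this
    exact ne_top_of_le_ne_top (by simp [lt_top_iff_ne_top.mp (measure_lt_top π S)]
      : (1 : ENNReal) * π S ≠ ⊤) this
  -- decomposition of flow out of H
  have hsplit : ∫⁻ x in H, κ x Hᶜ ∂π
      = (∫⁻ x in H, κ x A ∂π) + ∫⁻ x in H, κ x G ∂π := by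
    have hdisj : Disjoint A G := Set.disjoint_left.mpr fun x hx hxg => hxg.2 hx
    have hcup : Hᶜ = A ∪ G := by
      ext x
      constructor
      · intro hx
        by_cases hxA : x ∈ A
        · exact Or.inl hxA
        · exact Or.inr ⟨hx, hxA⟩
      · rintro (hx | hx)
        · exact hAsub hx
        · exact hx.1
    have : ∀ x, κ x Hᶜ = κ x A + κ x G := by
      intro x
      rw [hcup, measure_union hdisj hGm]
    simp_rw [this]
    exact lintegral_add_left (κ.measurable_coe hA) _
  have hrev1 : ∫⁻ x in H, κ x A ∂π = ∫⁻ x in A, κ x H ∂π := hrev H A hHm hA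
  have hrev2 : ∫⁻ x in H, κ x G ∂π = ∫⁻ x in G, κ x H ∂π := hrev H G hHm hGm
  -- bound on the G-integral
  have hGbound : ∫⁻ x in G, κ x H ∂π ≤ ENNReal.ofReal ε * π G := by
    rw [← setLIntegral_const]
    refine setLIntegral_mono measurable_const fun x hx => ?_
    have hx1 : x ∈ Aᶜ := hx.2
    have hx2 : x ∉ H := hx.1
    have hlt : (κ x Aᶜ).toReal < ε := by
      by_contra hcon
      exact hx2 ⟨hx1, le_of_not_gt hcon⟩
    calc κ x H ≤ κ x Aᶜ := measure_mono hHsub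
      _ = ENNReal.ofReal (κ x Aᶜ).toReal := (ENNReal.ofReal_toReal
          (ne_top_of_le_ne_top ENNReal.one_ne_top prob_le_one)).symm
      _ ≤ ENNReal.ofReal ε := ENNReal.ofReal_le_ofReal hlt.le
  -- real versions
  set X := (∫⁻ x in A, κ x H ∂π).toReal with hX
  set Y := (∫⁻ x in G, κ x H ∂π).toReal with hY
  have hX0 : 0 ≤ X := ENNReal.toReal_nonneg
  have hF : flow κ π H = X + Y := by
    rw [flow, hsplit, hrev1, hrev2, ENNReal.toReal_add (hbound A H) (hbound G H)]
  have hYle : Y ≤ ε * g := by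
    have := ENNReal.toReal_mono (by
        exact ENNReal.mul_ne_top ENNReal.ofReal_ne_top (measure_ne_top _ _)) hGbound
    rwa [ENNReal.toReal_mul, ENNReal.toReal_ofReal hε.le] at this
  -- from k ≤ isoQ: X + Y ≥ k * (h * hc)
  have hflow : k * (h * hc) ≤ X + Y := by
    have := hkle
    rw [isoQ, hF] at this
    calc k * (h * hc) ≤ ((X + Y) / (h * hc)) * (h * hc) :=
          mul_le_mul_of_nonneg_right this (by positivity)
      _ = X + Y := by field_simp
  have hXge : k * h * a - ε * g ≤ X := by
    have h1' : k * h * a ≤ k * h * hc :=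
      mul_le_mul_of_nonneg_left hahc (by positivity)
    nlinarith [hflow, hYle]
  -- final chain
  have step2 : k * h - ε * g / a ≤ X / a := by
    rw [le_div_iff₀ ha0]
    have : (k * h - ε * g / a) * a = k * h * a - ε * g := by
      field_simp
    rw [this]
    exact hXge
  have step1 : X / a ≤ X / (a * ac) := by
    apply div_le_div_of_nonneg_left hX0 (by positivity)
    nlinarith
  rw [ge_iff_le]
  calc h * k - ε * g / a = k * h - ε * g / a := by ring_nf
    _ ≤ X / a := step2
    _ ≤ X / (a * ac) := step1
end

section
/- If f : ℝ_{>0}⁴ → ℝ is defined by f(δ,ε₁,ε₂,ε) := min[(k²/16)δ, (k/4)(ε₁ε₂(1−δ)−δ), ε(k((2−ε)(1−ε₁)(1−ε₂)(1−δ)/((1−ε)K) − 1/(1−ε)) − ε/(1−ε))] with constants 0 < k ≤ K < 2, then sup over δ,ε₁,ε₂,ε > 0 of f is strictly positive. -/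
open MeasureTheory ProbabilityTheory

/-- For `0 < k ≤ K < 2`, the supremum over `δ,ε₁,ε₂,ε > 0` of
the minimum of the three terms is strictly positive: there is a choice of the
parameters making all three terms positive. -/
theorem sup_min_pos (k K : ℝ) (hk : 0 < k) (hkK : k ≤ K) (hK : K < 2) :
    ∃ δ ε₁ ε₂ ε : ℝ, 0 < δ ∧ 0 < ε₁ ∧ 0 < ε₂ ∧ 0 < ε ∧
      0 < min (k ^ 2 / 16 * δ)
        (min (k / 4 * (ε₁ * ε₂ * (1 - δ) - δ))
          (ε * (k * ((2 - ε) * (1 - ε₁) * (1 - ε₂) * (1 - δ) / ((1 - ε) * K) -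
              1 / (1 - ε)) -
            ε / (1 - ε)))) := by

  have hK0 : (0:ℝ) < K := lt_of_lt_of_le hk hkK
  set B : ℝ → ℝ := fun t =>
    k * ((2 - t) * (1 - t) * (1 - t) * (1 - t ^ 2 / 2) / ((1 - t) * K) - 1 / (1 - t)) -
      t / (1 - t) with hBdef
  have hBcont : ContinuousAt B 0 := by
    apply ContinuousAt.sub
    · apply ContinuousAt.mul continuousAt_const
      apply ContinuousAt.sub
      · exact ContinuousAt.div (by fun_prop) (by fun_prop)
          (by simp [hK0.ne'])
      · exact ContinuousAt.div continuousAt_const (by fun_prop) (by norm_num)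
    · exact ContinuousAt.div (by fun_prop) (by fun_prop) (by norm_num)
  have hB0 : 0 < B 0 := by
    have h2K : 1 < 2 / K := (one_lt_div hK0).mpr hK
    have : B 0 = k * (2 / K - 1) := by simp [hBdef]
    rw [this]
    have : 0 < 2 / K - 1 := by linarith
    positivity
  have hev : ∀ᶠ t in nhds (0:ℝ), 0 < B t :=
    hBcont.eventually (eventually_gt_nhds hB0)
  rcases Metric.eventually_nhds_iff.mp hev with ⟨η, hη, hball⟩
  set t := min η 1 / 2 with ht
  have ht0 : 0 < t := by positivity
  have htη : t < η := by
    have : min η 1 ≤ η := min_le_left _ _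
    linarith
  have ht1 : t < 1 := by
    have : min η 1 ≤ 1 := min_le_right _ _
    linarith
  have hBt : 0 < B t := by
    apply hball
    simp [Real.dist_eq, abs_of_pos ht0, htη]
  refine ⟨t ^ 2 / 2, t, t, t, by positivity, ht0, ht0, ht0, ?_⟩
  have h1 : 0 < k ^ 2 / 16 * (t ^ 2 / 2) := by positivity
  have h2 : 0 < k / 4 * (t * t * (1 - t ^ 2 / 2) - t ^ 2 / 2) := by
    have ht2 : t ^ 2 < 1 := by nlinarith
    have : 0 < t * t * (1 - t ^ 2 / 2) - t ^ 2 / 2 := by nlinarith [pow_pos ht0 2]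
    positivity
  have h3 : 0 < t * (k * ((2 - t) * (1 - t) * (1 - t) * (1 - t ^ 2 / 2) / ((1 - t) * K) -
      1 / (1 - t)) - t / (1 - t)) := mul_pos ht0 hBt
  exact lt_min h1 (lt_min h2 h3)
end
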